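/- Let n be a natural number, θ₀, θ₁ ∈ ℂ, and let q, p : ℝ → Matrix (Fin n) (Fin n) ℂ be differentiable functions satisfying, for all t, q'(t) = p(t)·q(t) + q(t)·p(t) − (q t)² − t·q(t) + θ₀·1 and p'(t) = p(t)·q(t) + q(t)·p(t) − (p t)² + t·p(t) + (θ₀+θ₁)·1. Then the matrix commutator [p(t), q(t)] = p(t)·q(t) − q(t)·p(t) is constant in t (its derivative is the zero matrix for every t). -/

import Mathlib

/-- Along the matrix Painlevé IV flow
`q' = pq + qp − q² − tq + θ₀·1`, `p' = pq + qp − p² + tp + (θ₀+θ₁)·1`,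
the commutator `[p, q] = pq − qp` (the moment map of the adjoint `GL(n)`-action)
is conserved: its entrywise time derivative vanishes. -/
theorem matrix_painleveIV_moment_map_conserved (n : ℕ) (θ₀ θ₁ : ℂ)
    (q p : ℝ → Matrix (Fin n) (Fin n) ℂ)
    (hq : ∀ (t : ℝ) (i j : Fin n),
      HasDerivAt (fun s => q s i j)
        ((p t * q t + q t * p t - (q t) ^ 2 - (t : ℂ) • q t
          + θ₀ • (1 : Matrix (Fin n) (Fin n) ℂ)) i j) t)
    (hp : ∀ (t : ℝ) (i j : Fin n),
      HasDerivAt (fun s => p s i j)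
        ((p t * q t + q t * p t - (p t) ^ 2 + (t : ℂ) • p t
          + (θ₀ + θ₁) • (1 : Matrix (Fin n) (Fin n) ℂ)) i j) t) :
    ∀ (t : ℝ) (i j : Fin n),
      HasDerivAt (fun s => (p s * q s - q s * p s) i j) 0 t := by
  intro t i j
  set Q : Matrix (Fin n) (Fin n) ℂ :=
    p t * q t + q t * p t - (q t) ^ 2 - (t : ℂ) • q t
      + θ₀ • (1 : Matrix (Fin n) (Fin n) ℂ) with hQdef
  set P : Matrix (Fin n) (Fin n) ℂ :=
    p t * q t + q t * p t - (p t) ^ 2 + (t : ℂ) • p t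
      + (θ₀ + θ₁) • (1 : Matrix (Fin n) (Fin n) ℂ) with hPdef
  have hmul : ∀ (a b : ℝ → Matrix (Fin n) (Fin n) ℂ) (A B : Matrix (Fin n) (Fin n) ℂ),
      (∀ i j, HasDerivAt (fun s => a s i j) (A i j) t) →
      (∀ i j, HasDerivAt (fun s => b s i j) (B i j) t) →
      ∀ i j : Fin n, HasDerivAt (fun s => (a s * b s) i j) ((A * b t + a t * B) i j) t := by
    intro a b A B ha hb i j
    have h : HasDerivAt (fun s => ∑ k, a s i k * b s k j)
        (∑ k, (A i k * b t k j + a t i k * B k j)) t :=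
      HasDerivAt.fun_sum fun k _ => (ha i k).mul (hb k j)
    simpa [Matrix.mul_apply, Matrix.add_apply, Finset.sum_add_distrib] using h
  have h1 := hmul p q P Q (hp t) (hq t) i j
  have h2 := hmul q p Q P (hq t) (hp t) i j
  have h3 := h1.fun_sub h2
  have hz : P * q t + p t * Q - (Q * p t + q t * P) = 0 := by
    simp only [hQdef, hPdef]
    simp only [add_mul, mul_add, sub_mul, mul_sub, smul_mul_assoc, mul_smul_comm,
      Matrix.one_mul, Matrix.mul_one, pow_two, mul_assoc]
    abel
  have hz' : (P * q t + p t * Q) i j - (Q * p t + q t * P) i j = 0 := by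
    have := congrFun (congrFun hz i) j
    simpa [Matrix.sub_apply] using this
  rw [hz'] at h3
  simpa [Matrix.sub_apply] using h3
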